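/- Fix 0 < ξ < 1 and real m > 0. Define f_l(x) = (1 − ξ^{l+x})(1 − ξ^{l−x})/(l² − x²). Then for every δ ∈ (0, m) there exists l₁ > 4m such that for all real l ≥ l₁, f_l is strictly increasing on the interval [δ, m]. -/

import Mathlib

open Real Set Filter Topology

private lemma hankel_phi_deriv (c : ℝ) (hc : c < 0) {t : ℝ} (ht : 0 < t) :
    HasDerivAt (fun t => Real.log (1 - Real.exp (c * t)) - Real.log t)
      (-(Real.exp (c * t) * c) / (1 - Real.exp (c * t)) - t⁻¹) t := by
  have he : Real.exp (c * t) < 1 := by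
    rw [Real.exp_lt_one_iff]
    exact mul_neg_of_neg_of_pos hc ht
  have h1 : (0 : ℝ) < 1 - Real.exp (c * t) := by linarith
  have hct : HasDerivAt (fun t : ℝ => c * t) c t := by
    simpa using (hasDerivAt_id t).const_mul c
  have hu : HasDerivAt (fun t : ℝ => Real.exp (c * t)) (Real.exp (c * t) * c) t := hct.exp
  have hnum : HasDerivAt (fun t : ℝ => 1 - Real.exp (c * t)) (-(Real.exp (c * t) * c)) t := by
    simpa using (hu.const_sub 1)
  have hlog1 : HasDerivAt (fun t : ℝ => Real.log (1 - Real.exp (c * t)))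
      (-(Real.exp (c * t) * c) / (1 - Real.exp (c * t))) t := hnum.log h1.ne'
  exact hlog1.sub (Real.hasDerivAt_log ht.ne')

private lemma hankel_g_deriv (c : ℝ) (hc : c < 0) {t : ℝ} (ht : 0 < t) :
    HasDerivAt (fun t => -(Real.exp (c * t) * c) / (1 - Real.exp (c * t)) - t⁻¹)
      (-(c ^ 2 * Real.exp (c * t)) / (1 - Real.exp (c * t)) ^ 2 + 1 / t ^ 2) t := by
  have he : Real.exp (c * t) < 1 := by
    rw [Real.exp_lt_one_iff]
    exact mul_neg_of_neg_of_pos hc ht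
  have h1 : (0 : ℝ) < 1 - Real.exp (c * t) := by linarith
  have hct : HasDerivAt (fun t : ℝ => c * t) c t := by
    simpa using (hasDerivAt_id t).const_mul c
  have hu : HasDerivAt (fun t : ℝ => Real.exp (c * t)) (Real.exp (c * t) * c) t := hct.exp
  have hnum : HasDerivAt (fun t : ℝ => -(Real.exp (c * t) * c))
      (-(Real.exp (c * t) * c * c)) t := by
    simpa [mul_comm, mul_assoc] using (hu.const_mul (-c))
  have hden : HasDerivAt (fun t : ℝ => 1 - Real.exp (c * t)) (-(Real.exp (c * t) * c)) t := by
    simpa using (hu.const_sub 1)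
  have hdiv := hnum.div hden h1.ne'
  have hinv : HasDerivAt (fun t : ℝ => t⁻¹) (-(t ^ 2)⁻¹) t := hasDerivAt_inv ht.ne'
  have := hdiv.sub hinv
  refine this.congr_deriv ?_
  have hne : (1 - Real.exp (c * t)) ≠ 0 := h1.ne'
  ring

private lemma hankel_exists_T (c : ℝ) (hc : c < 0) :
    ∃ T ≥ 1, StrictConvexOn ℝ (Set.Ici T)
      (fun t => Real.log (1 - Real.exp (c * t)) - Real.log t) := by
  have hb : (0 : ℝ) < -c := by linarith
  -- c^2 * t^2 * exp (c*t) → 0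
  have h1 : Tendsto (fun t : ℝ => c ^ 2 * t ^ 2 * Real.exp (c * t)) atTop (𝓝 0) := by
    have hbase := (Real.tendsto_pow_mul_exp_neg_atTop_nhds_zero 2).comp
      (tendsto_id.const_mul_atTop hb)
    refine hbase.congr fun t => ?_
    simp only [Function.comp_apply, id_eq]
    have : -((-c) * t) = c * t := by ring
    rw [this]
    ring
  obtain ⟨T₀, hT₀⟩ := (h1.eventually_lt_const (by norm_num : (0:ℝ) < 1/4)).exists_forall_of_atTop
  set T : ℝ := max (max T₀ 1) (Real.log (1/2) / c) with hTdef
  have hT1 : (1 : ℝ) ≤ T := le_trans (le_max_right _ _) (le_max_left _ _)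
  refine ⟨T, hT1, ?_⟩
  have hTpos : (0 : ℝ) < T := lt_of_lt_of_le one_pos hT1
  have hmem : ∀ t : ℝ, t ∈ Set.Ici T → 0 < t := fun t ht => lt_of_lt_of_le hTpos ht
  apply strictConvexOn_of_deriv2_pos (convex_Ici T)
  · intro t ht
    exact ((hankel_phi_deriv c hc (hmem t ht)).differentiableAt.continuousAt).continuousWithinAt
  · intro t ht
    rw [interior_Ici] at ht
    have htT : T < t := ht
    have ht0 : 0 < t := lt_trans hTpos htT
    -- second derivative computation
    have hEq : deriv (fun t => Real.log (1 - Real.exp (c * t)) - Real.log t)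
        =ᶠ[nhds t] (fun t => -(Real.exp (c * t) * c) / (1 - Real.exp (c * t)) - t⁻¹) := by
      filter_upwards [Ioi_mem_nhds ht0] with s hs
      exact (hankel_phi_deriv c hc hs).deriv
    have h2 : deriv^[2] (fun t => Real.log (1 - Real.exp (c * t)) - Real.log t) t
        = -(c ^ 2 * Real.exp (c * t)) / (1 - Real.exp (c * t)) ^ 2 + 1 / t ^ 2 := by
      have : deriv^[2] (fun t => Real.log (1 - Real.exp (c * t)) - Real.log t) t
          = deriv (deriv (fun t => Real.log (1 - Real.exp (c * t)) - Real.log t)) t := rfl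
      rw [this, hEq.deriv_eq, (hankel_g_deriv c hc ht0).deriv]
    rw [h2]
    -- positivity
    have he : Real.exp (c * t) < 1 := by
      rw [Real.exp_lt_one_iff]; exact mul_neg_of_neg_of_pos hc ht0
    have hD : (1 : ℝ) / 2 ≤ 1 - Real.exp (c * t) := by
      have hTc : Real.log (1/2) / c ≤ T := le_max_right _ _
      have : c * t ≤ Real.log (1/2) := by
        have := (div_le_iff_of_neg hc).mp (le_of_lt (lt_of_le_of_lt hTc htT))
        linarith [this]
      calc (1 : ℝ)/2 = 1 - Real.exp (Real.log (1/2)) := by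
              rw [Real.exp_log (by norm_num)]; norm_num
        _ ≤ 1 - Real.exp (c * t) := by
              have := Real.exp_le_exp.mpr this
              linarith
    have hsmall : c ^ 2 * t ^ 2 * Real.exp (c * t) < 1/4 := by
      apply hT₀
      exact le_of_lt (lt_of_le_of_lt (le_trans (le_max_left T₀ 1) (le_max_left _ _)) htT)
    have hc2 : (0 : ℝ) < c ^ 2 := by nlinarith
    have hE : (0 : ℝ) < Real.exp (c * t) := Real.exp_pos _
    have hD2 : (1 : ℝ)/4 ≤ (1 - Real.exp (c * t)) ^ 2 := by nlinarith
    have key : c ^ 2 * Real.exp (c * t) / (1 - Real.exp (c * t)) ^ 2 < 1 / t ^ 2 := by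
      have step1 : c ^ 2 * Real.exp (c * t) / (1 - Real.exp (c * t)) ^ 2
          ≤ c ^ 2 * Real.exp (c * t) / (1/4) :=
        div_le_div_of_nonneg_left (by positivity) (by norm_num) hD2
      have step2 : c ^ 2 * Real.exp (c * t) / (1/4) < 1 / t ^ 2 := by
        rw [div_lt_div_iff₀ (by norm_num) (by positivity)]
        nlinarith
      exact lt_of_le_of_lt step1 step2
    have : -(c ^ 2 * Real.exp (c * t)) / (1 - Real.exp (c * t)) ^ 2 + 1 / t ^ 2
        = 1 / t ^ 2 - c ^ 2 * Real.exp (c * t) / (1 - Real.exp (c * t)) ^ 2 := by ring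
    rw [this]
    linarith

/-- For `0 < ξ < 1`, `m > 0`, and any `δ ∈ (0, m)`, there is `l₁ > 4m` such
that `f_l(x) = (1 − ξ^{l+x})(1 − ξ^{l−x})/(l² − x²)` is strictly increasing on
`[δ, m]` for every `l ≥ l₁`. -/
theorem hankel_stmt7 (ξ m : ℝ) (hξ0 : 0 < ξ) (hξ1 : ξ < 1) (hm : 0 < m) :
    ∀ δ ∈ Set.Ioo 0 m, ∃ l₁ > 4 * m, ∀ l ≥ l₁,
      StrictMonoOn
        (fun x : ℝ => (1 - ξ ^ (l + x)) * (1 - ξ ^ (l - x)) / (l ^ 2 - x ^ 2))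
        (Set.Icc δ m) := by
  intro δ hδ
  obtain ⟨hδ0, hδm⟩ := hδ
  set c : ℝ := Real.log ξ with hcdef
  have hc : c < 0 := Real.log_neg hξ0 hξ1
  obtain ⟨T, hT1, hconv⟩ := hankel_exists_T c hc
  set φ : ℝ → ℝ := fun t => Real.log (1 - Real.exp (c * t)) - Real.log t with hφdef
  refine ⟨max (T + m) (4 * m + 1), lt_of_lt_of_le (by linarith) (le_max_right _ _),
    fun l hl => ?_⟩
  have hlT : T + m ≤ l := le_trans (le_max_left _ _) hl
  have hl4 : 4 * m + 1 ≤ l := le_trans (le_max_right _ _) hl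
  -- representation of f via exp ∘ φ
  have hexp : ∀ t : ℝ, 0 < t → (1 - ξ ^ t) / t = Real.exp (φ t) := by
    intro t ht
    have hξt : ξ ^ t = Real.exp (c * t) := by
      rw [Real.rpow_def_of_pos hξ0]
    have he : Real.exp (c * t) < 1 := by
      rw [Real.exp_lt_one_iff]; exact mul_neg_of_neg_of_pos hc ht
    have h1 : (0 : ℝ) < 1 - Real.exp (c * t) := by linarith
    rw [hξt, hφdef]
    simp only
    rw [Real.exp_sub, Real.exp_log h1, Real.exp_log ht]
  have repr : ∀ z : ℝ, 0 < z → z ≤ m →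
      (1 - ξ ^ (l + z)) * (1 - ξ ^ (l - z)) / (l ^ 2 - z ^ 2)
        = Real.exp (φ (l + z) + φ (l - z)) := by
    intro z hz hzm
    have h1 : 0 < l - z := by linarith
    have h2 : 0 < l + z := by linarith
    rw [show l ^ 2 - z ^ 2 = (l + z) * (l - z) by ring, ← div_mul_div_comm,
      hexp _ h2, hexp _ h1, ← Real.exp_add]
  intro x hx y hy hxy
  obtain ⟨hδx, hxm⟩ := hx
  obtain ⟨hδy, hym⟩ := hy
  have hx0 : 0 < x := lt_of_lt_of_le hδ0 hδx
  have hy0 : 0 < y := hx0.trans hxy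
  have hTpos : (0 : ℝ) < T := lt_of_lt_of_le one_pos hT1
  have ha : l - y ∈ Set.Ici T := by simp only [Set.mem_Ici]; linarith
  have hbmem : l - x ∈ Set.Ici T := by simp only [Set.mem_Ici]; linarith
  have hcmem : l + x ∈ Set.Ici T := by simp only [Set.mem_Ici]; linarith
  have hdmem : l + y ∈ Set.Ici T := by simp only [Set.mem_Ici]; linarith
  have key : φ (l + x) + φ (l - x) < φ (l + y) + φ (l - y) := by
    have s1 := hconv.slope_strict_mono_adjacent ha hcmem
      (show l - y < l - x by linarith) (show l - x < l + x by linarith)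
    have s2 := hconv.slope_strict_mono_adjacent hbmem hdmem
      (show l - x < l + x by linarith) (show l + x < l + y by linarith)
    have htrans := s1.trans s2
    have e1 : l - x - (l - y) = y - x := by ring
    have e2 : l + y - (l + x) = y - x := by ring
    rw [e1, e2] at htrans
    have := (div_lt_div_iff_of_pos_right (show (0:ℝ) < y - x by linarith)).mp htrans
    linarith
  simp only
  rw [repr x hx0 hxm, repr y hy0 hym]
  exact Real.exp_lt_exp.mpr key
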